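/- arXiv:2008.11987 — 4 statements merged into one kernel-verified Lean document; each statement's English description precedes it below -/
import Mathlib

section
/- Let $L>0$, $v_{max}>0$, and suppose $x_i, x_{i+1} \in \mathbb{R}$ satisfy $x_{i+1} - x_i - L \geq 0$. Define the Euler updates $x_i' = x_i + \Delta t\, c_i (1 - L/(x_{i+1}-x_i))$ and $x_{i+1}' = x_{i+1} + \Delta t\, c_{i+1}(1 - L/(x_{i+2}-x_{i+1}))$ where $0 \leq c_i, c_{i+1} \leq v_{max}$ and $x_{i+2} - x_{i+1} \geq L > 0$. If $\Delta t \leq L/v_{max}$, then $x_{i+1}' - x_i' - L \geq 0$. -/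
/-- CFL-type collision avoidance for one Euler step of the Follow-the-Leader model. -/
theorem stmt_0 (L vmax Δt : ℝ) (ci ci1 xi xi1 xi2 : ℝ)
    (hL : 0 < L) (hv : 0 < vmax)
    (hgap : 0 ≤ xi1 - xi - L)
    (hgap2 : L ≤ xi2 - xi1)
    (hci : 0 ≤ ci) (hci' : ci ≤ vmax)
    (hci1 : 0 ≤ ci1) (hci1' : ci1 ≤ vmax)
    (hΔt0 : 0 ≤ Δt) (hΔt : Δt ≤ L / vmax) :
    (xi1 + Δt * ci1 * (1 - L / (xi2 - xi1)))
      - (xi + Δt * ci * (1 - L / (xi1 - xi))) - L ≥ 0 := by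
  have hg : 0 < xi1 - xi := by linarith
  have hg2 : 0 < xi2 - xi1 := by linarith
  have hc : Δt * ci ≤ L := by
    have := mul_le_mul hΔt hci' hci (le_of_lt (div_pos hL hv))
    rwa [div_mul_cancel₀ _ (ne_of_gt hv)] at this
  have h2 : L / (xi2 - xi1) ≤ 1 := (div_le_one hg2).mpr hgap2
  have h3 : 0 ≤ Δt * ci1 * (1 - L / (xi2 - xi1)) :=
    mul_nonneg (mul_nonneg hΔt0 hci1) (by linarith)
  have key : Δt * ci * (1 - L / (xi1 - xi)) ≤ xi1 - xi - L := by
    have heq : 1 - L / (xi1 - xi) = (xi1 - xi - L) / (xi1 - xi) := by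
      field_simp
    rw [heq, ← mul_div_assoc, div_le_iff₀ hg]
    nlinarith [mul_nonneg (mul_nonneg hΔt0 hci) hgap]
  linarith
end

section
/- Let $x_{i+1}(t_j) - x_i(t_j) - L \geq 0$ and $x_{i+2}(t_j) - x_{i+1}(t_j) \geq L$. With the Euler update using bounded capacities $c(x) \in [0, v_{max}]$, the difference after one step satisfies $x_{i+1}(t_{j+1}) - x_i(t_{j+1}) - L \geq (x_{i+1}(t_j) - x_i(t_j) - L)(1 - \Delta t\, v_{max}/L)$. -/
/-- One-step Euler gap estimate: the new headway minus vehicle length is bounded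
below by the old one times `(1 - Δt vmax / L)`. -/
theorem stmt_1 (L vmax Δt : ℝ) (c : ℝ → ℝ) (xi xi1 xi2 : ℝ)
    (hL : 0 < L) (hv : 0 < vmax)
    (hgap : 0 ≤ xi1 - xi - L)
    (hgap2 : L ≤ xi2 - xi1)
    (hc : ∀ x, 0 ≤ c x ∧ c x ≤ vmax)
    (hΔt0 : 0 ≤ Δt) :
    (xi1 + Δt * c xi1 * (1 - L / (xi2 - xi1)))
      - (xi + Δt * c xi * (1 - L / (xi1 - xi))) - L
      ≥ (xi1 - xi - L) * (1 - Δt * vmax / L) := by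
  obtain ⟨hc1a, hc1b⟩ := hc xi1
  obtain ⟨hc0a, hc0b⟩ := hc xi
  have hd1 : 0 < xi1 - xi := by linarith
  have hd2 : 0 < xi2 - xi1 := by linarith
  have h1 : 0 ≤ 1 - L / (xi2 - xi1) := by
    rw [sub_nonneg, div_le_one hd2]; linarith
  have hA : 0 ≤ Δt * c xi1 * (1 - L / (xi2 - xi1)) :=
    mul_nonneg (mul_nonneg hΔt0 hc1a) h1
  have h3 : 1 - L / (xi1 - xi) = (xi1 - xi - L) / (xi1 - xi) := by
    field_simp
  have h2 : 0 ≤ 1 - L / (xi1 - xi) := by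
    rw [h3]; positivity
  have h4 : (xi1 - xi - L) / (xi1 - xi) ≤ (xi1 - xi - L) / L := by
    gcongr; linarith
  have hB : c xi * (1 - L / (xi1 - xi)) ≤ vmax * ((xi1 - xi - L) / L) := by
    rw [h3]
    apply mul_le_mul hc0b h4 (by positivity) (le_of_lt hv)
  have hB' : Δt * c xi * (1 - L / (xi1 - xi)) ≤ Δt * (vmax * ((xi1 - xi - L) / L)) := by
    rw [mul_assoc]
    exact mul_le_mul_of_nonneg_left hB hΔt0
  have hkey : (xi1 - xi - L) * (1 - Δt * vmax / L)
      = (xi1 - xi - L) - Δt * (vmax * ((xi1 - xi - L) / L)) := by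
    ring
  linarith
end

section
/- Let $f(y,w) = c(y)v(w)$ with $v(w) = 1 - 1/w$, where $c: \mathbb{R} \to \mathbb{R}$ is Lipschitz continuous with constant $L_c$ and uniformly bounded. Suppose the initial values satisfy $\|w^{(N)}(0)\|_\infty \leq K < \infty$ and $w_i^{(N)}(0) \geq 1$ for all $i$. Under the CFL condition $\lambda |f_w| \leq 1$ with $\lambda = \Delta t/\Delta y$, one step of the Lax-Friedrichs scheme $w_i(t_{j+1}) = \frac{1}{2}(w_{i-1}(t_j) + w_{i+1}(t_j)) + \frac{\lambda}{2}(f(y_{i+1/2}, w_{i+1}(t_j)) - f(y_{i-3/2}, w_{i-1}(t_j)))$ satisfies $\|w^{(N)}(t_{j+1})\|_\infty \leq \|w^{(N)}(t_j)\|_\infty + \Delta t\, L_c$. -/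
/-- One-step sup-norm growth bound for the Lax-Friedrichs scheme for the
Lagrangian inverse densities: `‖w(t_{j+1})‖_∞ ≤ ‖w(t_j)‖_∞ + Δt L_c`. -/
theorem stmt_6 (c : ℝ → ℝ) (Lc : NNReal) (hc : LipschitzWith Lc c)
    (hcbd : ∃ M, ∀ y, |c y| ≤ M)
    (Δt Δy : ℝ) (hΔt : 0 < Δt) (hΔy : 0 < Δy)
    (Y : ℤ → ℝ) (hY : ∀ i, Y (i + 1) = Y i + Δy)
    (w w' : ℤ → ℝ) (K : ℝ)
    (hw1 : ∀ i, 1 ≤ w i) (hwK : ∀ i, |w i| ≤ K)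
    -- CFL condition `λ |f_w| ≤ 1` expressed as a Lipschitz bound on the flux in `w`
    (hCFL : ∀ y a b : ℝ, 1 ≤ a → 1 ≤ b →
      |c y * (1 - 1 / a) - c y * (1 - 1 / b)| ≤ (Δy / Δt) * |a - b|)
    (hscheme : ∀ i : ℤ, w' i = (w (i - 1) + w (i + 1)) / 2
      + (Δt / Δy) / 2 * (c (Y i) * (1 - 1 / w (i + 1))
        - c (Y (i - 2)) * (1 - 1 / w (i - 1)))) :
    ∀ i, |w' i| ≤ K + Δt * Lc := by
  intro i
  set a := w (i + 1) with ha
  set b := w (i - 1) with hb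
  have ha1 : 1 ≤ a := hw1 _
  have hb1 : 1 ≤ b := hw1 _
  have haK : |a| ≤ K := hwK _
  have hbK : |b| ≤ K := hwK _
  have hYi : Y i - Y (i - 2) = 2 * Δy := by
    have h1 := hY (i - 2); have h2 := hY (i - 1)
    have e1 : (i - 2) + 1 = i - 1 := by ring
    have e2 : (i - 1) + 1 = i := by ring
    rw [e1] at h1; rw [e2] at h2
    linarith
  have hcdiff : |c (Y i) - c (Y (i - 2))| ≤ (Lc : ℝ) * (2 * Δy) := by
    have h := hc.dist_le_mul (Y i) (Y (i - 2))
    rw [Real.dist_eq, Real.dist_eq] at h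
    calc |c (Y i) - c (Y (i - 2))| ≤ (Lc : ℝ) * |Y i - Y (i - 2)| := h
      _ = (Lc : ℝ) * (2 * Δy) := by rw [hYi, abs_of_pos (by linarith)]
  have hvb : |1 - 1 / b| ≤ 1 := by
    have hbpos : (0:ℝ) < b := by linarith
    have h1 : 1 / b ≤ 1 := by rw [div_le_one hbpos]; exact hb1
    have h2 : 0 < 1 / b := by positivity
    rw [abs_le]; constructor <;> linarith
  have hflux := hCFL (Y i) a b ha1 hb1
  rw [hscheme i]
  have hdecomp : (b + a) / 2
      + (Δt / Δy) / 2 * (c (Y i) * (1 - 1 / a) - c (Y (i - 2)) * (1 - 1 / b))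
      = ((b + a) / 2 + (Δt / Δy) / 2 * (c (Y i) * (1 - 1 / a) - c (Y i) * (1 - 1 / b)))
        + (Δt / Δy) / 2 * ((c (Y i) - c (Y (i - 2))) * (1 - 1 / b)) := by ring
  rw [hdecomp]
  have hlampos : (0:ℝ) < (Δt / Δy) / 2 := by positivity
  have hs : |(Δt / Δy) / 2 * (c (Y i) * (1 - 1 / a) - c (Y i) * (1 - 1 / b))| ≤ |a - b| / 2 := by
    rw [abs_mul, abs_of_pos hlampos]
    calc (Δt / Δy) / 2 * |c (Y i) * (1 - 1 / a) - c (Y i) * (1 - 1 / b)|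
        ≤ (Δt / Δy) / 2 * ((Δy / Δt) * |a - b|) :=
          mul_le_mul_of_nonneg_left hflux (le_of_lt hlampos)
      _ = |a - b| / 2 := by field_simp
  have h1 : |(b + a) / 2 + (Δt / Δy) / 2 * (c (Y i) * (1 - 1 / a) - c (Y i) * (1 - 1 / b))| ≤ K := by
    rw [abs_le] at haK hbK ⊢
    obtain ⟨hs1, hs2⟩ := abs_le.mp hs
    rcases abs_cases (a - b) with ⟨h, _⟩ | ⟨h, _⟩ <;>
      constructor <;> linarith
  have h2 : |(Δt / Δy) / 2 * ((c (Y i) - c (Y (i - 2))) * (1 - 1 / b))| ≤ Δt * Lc := by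
    rw [abs_mul, abs_of_pos hlampos, abs_mul]
    have hnn : (0:ℝ) ≤ |c (Y i) - c (Y (i - 2))| := abs_nonneg _
    calc (Δt / Δy) / 2 * (|c (Y i) - c (Y (i - 2))| * |1 - 1 / b|)
        ≤ (Δt / Δy) / 2 * (((Lc : ℝ) * (2 * Δy)) * 1) := by
          apply mul_le_mul_of_nonneg_left _ (le_of_lt hlampos)
          exact mul_le_mul hcdiff hvb (abs_nonneg _) (by positivity)
      _ = Δt * Lc := by field_simp
  calc |((b + a) / 2 + (Δt / Δy) / 2 * (c (Y i) * (1 - 1 / a) - c (Y i) * (1 - 1 / b)))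
        + (Δt / Δy) / 2 * ((c (Y i) - c (Y (i - 2))) * (1 - 1 / b))|
      ≤ |(b + a) / 2 + (Δt / Δy) / 2 * (c (Y i) * (1 - 1 / a) - c (Y i) * (1 - 1 / b))|
        + |(Δt / Δy) / 2 * ((c (Y i) - c (Y (i - 2))) * (1 - 1 / b))| := abs_add_le _ _
    _ ≤ K + Δt * Lc := add_le_add h1 h2
end

section
/- Let $c: \mathbb{R} \to (0,\infty)$ be Lipschitz with constant $L_c > 0$, $v(w) = 1 - 1/w$ (Lipschitz with constant $L_v$ on $[1,\infty)$, bounded by 1 there), and $f(y,w) = c(y)v(w)$. Assume $w_{i}^{(N)}(t_0) \geq 1 + \varepsilon$ for all $i$ with $\varepsilon > 0$, and the CFL condition $\frac{\Delta t}{\Delta y} L_{f_w} < 1$ holds, where $L_{f_w}$ is the Lipschitz constant of $f$ in $w$ on $[1,\infty)$. If $\Delta t \leq (\varepsilon - \tilde\varepsilon)/L_c$ for some $0 < \tilde\varepsilon < \varepsilon$, then one Lax-Friedrichs step yields $w_i^{(N)}(t_1) \geq 1 + \tilde\varepsilon$ for all $i$. -/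
/-- Lower bound after one Lax-Friedrichs step: the safety distance `1 + ε`
degrades to at most `1 + ε̃` if `Δt ≤ (ε - ε̃)/L_c`. -/
theorem stmt_8 (c : ℝ → ℝ) (Lc Lv : NNReal) (hLc : (0:ℝ) < Lc)
    (hc : LipschitzWith Lc c) (hcpos : ∀ y, 0 < c y) (hcbd : ∃ M, ∀ y, |c y| ≤ M)
    (hvLip : ∀ a b : ℝ, 1 ≤ a → 1 ≤ b → |(1 - 1 / a) - (1 - 1 / b)| ≤ Lv * |a - b|)
    (hvbd : ∀ a : ℝ, 1 ≤ a → |1 - 1 / a| ≤ 1)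
    (Δt Δy : ℝ) (hΔt : 0 < Δt) (hΔy : 0 < Δy)
    (Y : ℤ → ℝ) (hY : ∀ i, Y (i + 1) = Y i + Δy)
    (Lfw : ℝ)
    (hLfw : ∀ y a b : ℝ, 1 ≤ a → 1 ≤ b →
      |c y * (1 - 1 / a) - c y * (1 - 1 / b)| ≤ Lfw * |a - b|)
    (hCFL : Δt / Δy * Lfw < 1)
    (ε εt : ℝ) (hεt : 0 < εt) (hεεt : εt < ε)
    (hΔtε : Δt ≤ (ε - εt) / Lc)
    (w w' : ℤ → ℝ) (hw : ∀ i, 1 + ε ≤ w i)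
    (hscheme : ∀ i : ℤ, w' i = (w (i - 1) + w (i + 1)) / 2
      + (Δt / Δy) / 2 * (c (Y (i + 1)) * (1 - 1 / w (i + 1))
        - c (Y (i - 1)) * (1 - 1 / w (i - 1)))) :
    ∀ i, 1 + εt ≤ w' i := by
  intro i
  have ha := hw (i - 1)
  have hb := hw (i + 1)
  have h1a : (1:ℝ) ≤ w (i - 1) := by linarith
  have h1b : (1:ℝ) ≤ w (i + 1) := by linarith
  set a := w (i - 1) with hadef
  set b := w (i + 1) with hbdef
  set ya := Y (i - 1) with hyadef
  set yb := Y (i + 1) with hybdef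
  have h2y : yb - ya = 2 * Δy := by
    have h1 := hY i
    have h2 := hY (i - 1)
    have : i - 1 + 1 = i := by ring
    rw [this] at h2
    rw [hybdef, hyadef, h1, h2]; ring
  have hcdist : |c yb - c ya| ≤ (Lc : ℝ) * (2 * Δy) := by
    have := hc.dist_le_mul yb ya
    rw [Real.dist_eq, Real.dist_eq, h2y] at this
    calc |c yb - c ya| ≤ (Lc : ℝ) * |2 * Δy| := this
      _ = (Lc : ℝ) * (2 * Δy) := by rw [abs_of_pos (by linarith)]
  have hva : |1 - 1 / a| ≤ 1 := hvbd a h1a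
  have hT2 : |(c yb - c ya) * (1 - 1 / a)| ≤ (Lc : ℝ) * (2 * Δy) := by
    rw [abs_mul]
    calc |c yb - c ya| * |1 - 1 / a| ≤ ((Lc : ℝ) * (2 * Δy)) * 1 := by
          apply mul_le_mul hcdist hva (abs_nonneg _)
          positivity
      _ = (Lc : ℝ) * (2 * Δy) := by ring
  have hT1 : |c yb * (1 - 1 / b) - c yb * (1 - 1 / a)| ≤ Lfw * |b - a| :=
    hLfw yb b a h1b h1a
  have hlam : 0 < Δt / Δy := div_pos hΔt hΔy
  have hcfl2 : Δt / Δy * (Lfw * |b - a|) ≤ |b - a| := by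
    nlinarith [abs_nonneg (b - a), hCFL, hlam]
  have hΔtLc : Δt * (Lc : ℝ) ≤ ε - εt := (le_div_iff₀ hLc).mp hΔtε
  have hT1' := (abs_le.mp hT1).1
  have hT2' := (abs_le.mp hT2).1
  have hlamΔy : Δt / Δy * Δy = Δt := div_mul_cancel₀ _ (ne_of_gt hΔy)
  rw [hscheme i]
  have hsplit : c yb * (1 - 1 / b) - c ya * (1 - 1 / a)
      = (c yb * (1 - 1 / b) - c yb * (1 - 1 / a)) + (c yb - c ya) * (1 - 1 / a) := by
    ring
  rw [hsplit]
  have habs : a - b ≤ |b - a| ∧ b - a ≤ |b - a| := by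
    constructor
    · rw [abs_sub_comm]; exact le_abs_self _
    · exact le_abs_self _
  have key1 : (a + b) / 2 - |b - a| / 2 ≥ 1 + ε := by
    rcases abs_cases (b - a) with ⟨h, _⟩ | ⟨h, _⟩ <;> rw [h] <;> linarith
  have e1 : Δt / Δy / 2 * (c yb * (1 - 1 / b) - c yb * (1 - 1 / a))
      ≥ -(|b - a| / 2) := by
    have : -(Lfw * |b - a|) ≤ c yb * (1 - 1 / b) - c yb * (1 - 1 / a) := hT1'
    nlinarith [hlam, hcfl2]
  have e2 : Δt / Δy / 2 * ((c yb - c ya) * (1 - 1 / a)) ≥ -(ε - εt) := by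
    have h3 : Δt / Δy * ((Lc : ℝ) * (2 * Δy)) = 2 * (Δt * (Lc : ℝ)) := by
      field_simp
    nlinarith [hlam, hT2']
  have : Δt / Δy / 2 * ((c yb * (1 - 1 / b) - c yb * (1 - 1 / a)) + (c yb - c ya) * (1 - 1 / a))
      = Δt / Δy / 2 * (c yb * (1 - 1 / b) - c yb * (1 - 1 / a))
        + Δt / Δy / 2 * ((c yb - c ya) * (1 - 1 / a)) := by ring
  rw [this]
  linarith [key1, e1, e2]
end
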